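/- Let w₁, …, w_m ∈ ℝⁿ and b₁, …, b_m ∈ ℝ define a ReLU layer with n inputs and m outputs, with unit i computing max(0, ⟨w_i, x⟩ + b_i). Then the number of linear regions of the layer, i.e., the number of strict sign patterns s ∈ {0,1}^m for which there exists x ∈ ℝⁿ with (⟨w_i, x⟩ + b_i > 0 ⟺ s_i = 1) and ⟨w_i, x⟩ + b_i ≠ 0 for all i, is at most min(2^m, Σ_{j=0}^{n} C(m, j)). -/

import Mathlib

open scoped RealInnerProductSpace

open Finset

private lemma relu_aux {n m : ℕ} (w : Fin m → EuclideanSpace ℝ (Fin n)) (b : Fin m → ℝ)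
    (t : Finset (Fin m)) (C : Fin m → ℝ) (μ : ℝ)
    (h1 : ∑ j ∈ t, C j • w j = 0)
    (h2 : ∑ j ∈ t, C j * b j = μ)
    (x : EuclideanSpace ℝ (Fin n))
    (hpos : ∀ j ∈ t, (0 < ⟪w j, x⟫ + b j ↔ 0 < C j))
    (hne : ∀ j ∈ t, ⟪w j, x⟫ + b j ≠ 0)
    (j0 : Fin m) (hj0 : j0 ∈ t) (hC : C j0 ≠ 0) :
    0 < μ := by
  have hin : ∑ j ∈ t, C j * ⟪w j, x⟫ = 0 := by
    have h0 : ⟪∑ j ∈ t, C j • w j, x⟫ = (0 : ℝ) := by rw [h1, inner_zero_left]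
    rw [← h0, sum_inner]
    exact Finset.sum_congr rfl fun j _ => (real_inner_smul_left _ _ _).symm
  have hsum : ∑ j ∈ t, C j * (⟪w j, x⟫ + b j) = μ := by
    calc ∑ j ∈ t, C j * (⟪w j, x⟫ + b j)
        = ∑ j ∈ t, (C j * ⟪w j, x⟫ + C j * b j) :=
          Finset.sum_congr rfl fun j _ => by ring
      _ = (∑ j ∈ t, C j * ⟪w j, x⟫) + ∑ j ∈ t, C j * b j := Finset.sum_add_distrib
      _ = μ := by rw [hin, h2, zero_add]
  have key : ∀ j ∈ t, C j ≠ 0 → 0 < C j * (⟪w j, x⟫ + b j) := by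
    intro j hj hCj
    rcases hCj.lt_or_gt with h | h
    · have hf : ⟪w j, x⟫ + b j < 0 := by
        rcases (hne j hj).lt_or_gt with h' | h'
        · exact h'
        · exact absurd ((hpos j hj).1 h') (by linarith)
      exact mul_pos_of_neg_of_neg h hf
    · exact mul_pos h ((hpos j hj).2 h)
  rw [← hsum]
  refine Finset.sum_pos' (fun j hj => ?_) ⟨j0, hj0, key j0 hj0 hC⟩
  by_cases h : C j = 0
  · simp [h]
  · exact le_of_lt (key j hj h)

private lemma relu_no_shatter {n m : ℕ} (w : Fin m → EuclideanSpace ℝ (Fin n)) (b : Fin m → ℝ)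
    (𝒜 : Finset (Finset (Fin m)))
    (h𝒜 : ∀ u ∈ 𝒜, ∃ x : EuclideanSpace ℝ (Fin n), ∀ i : Fin m,
      ((0 < ⟪w i, x⟫ + b i) ↔ i ∈ u) ∧ ⟪w i, x⟫ + b i ≠ 0)
    (t : Finset (Fin m)) (ht : 𝒜.Shatters t) : t.card ≤ n := by
  classical
  by_contra hlt
  push_neg at hlt
  obtain ⟨t', ht't, ht'card⟩ := Finset.exists_subset_card_eq (show n + 1 ≤ t.card from hlt)
  have ht' : 𝒜.Shatters t' := ht.mono_right ht't
  set v : Option {j // j ∈ t'} → EuclideanSpace ℝ (Fin n) × ℝ :=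
    fun o => o.elim ((0 : EuclideanSpace ℝ (Fin n)), (1 : ℝ)) (fun j => (w j, b j)) with hvdef
  have hnli : ¬ LinearIndependent ℝ v := by
    intro h
    have hle := h.fintype_card_le_finrank
    rw [Fintype.card_option, Fintype.card_coe, ht'card, Module.finrank_prod,
      finrank_euclideanSpace_fin, Module.finrank_self] at hle
    omega
  obtain ⟨g, hg0, i0, hi0⟩ := Fintype.not_linearIndependent_iff.1 hnli
  set μ : ℝ := g none with hμdef
  set C : Fin m → ℝ := fun j => if h : j ∈ t' then g (some ⟨j, h⟩) else 0 with hCdef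
  have hrel : μ • (((0 : EuclideanSpace ℝ (Fin n)), (1 : ℝ)) : EuclideanSpace ℝ (Fin n) × ℝ) + ∑ j ∈ t', C j • ((w j, b j) : EuclideanSpace ℝ (Fin n) × ℝ) = 0 := by
    rw [← hg0, Fintype.sum_option]
    congr 1
    rw [← Finset.sum_attach t' (fun j => C j • ((w j, b j) : EuclideanSpace ℝ (Fin n) × ℝ)), Finset.univ_eq_attach]
    exact Finset.sum_congr rfl fun x _ => by simp [hCdef, hvdef, x.2]
  have h1 : ∑ j ∈ t', C j • w j = 0 := by
    have := congrArg Prod.fst hrel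
    simpa [Prod.fst_sum] using this
  have h2 : ∑ j ∈ t', C j * b j = -μ := by
    have := congrArg Prod.snd hrel
    simp [Prod.snd_sum, smul_eq_mul] at this
    linarith
  have hex : ∃ j0 ∈ t', C j0 ≠ 0 := by
    by_contra hall
    push_neg at hall
    have hμ0 : μ = 0 := by
      have hz : ∑ j ∈ t', C j * b j = 0 :=
        Finset.sum_eq_zero fun j hj => by rw [hall j hj, zero_mul]
      linarith [h2.symm.trans hz]
    apply hi0
    cases i0 with
    | none => exact hμ0
    | some j =>
        have h := hall j.1 j.2
        simpa [hCdef, j.2] using h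
  obtain ⟨j0, hj0, hCj0⟩ := hex
  -- first pattern: signs matching C
  obtain ⟨u₁, hu₁, htu₁⟩ := ht' (Finset.filter_subset (fun j => 0 < C j) t')
  obtain ⟨x₁, hx₁⟩ := h𝒜 u₁ hu₁
  have hp1 : 0 < -μ := by
    refine relu_aux w b t' C (-μ) h1 h2 x₁ (fun j hj => ?_) (fun j hj => (hx₁ j).2) j0 hj0 hCj0
    rw [(hx₁ j).1]
    constructor
    · intro h
      have hmem : j ∈ t' ∩ u₁ := Finset.mem_inter.2 ⟨hj, h⟩
      rw [htu₁] at hmem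
      exact (Finset.mem_filter.1 hmem).2
    · intro h
      have hmem : j ∈ t'.filter (fun j => 0 < C j) := Finset.mem_filter.2 ⟨hj, h⟩
      rw [← htu₁] at hmem
      exact (Finset.mem_inter.1 hmem).2
  -- second pattern: signs matching -C
  obtain ⟨u₂, hu₂, htu₂⟩ := ht' (Finset.filter_subset (fun j => 0 < -C j) t')
  obtain ⟨x₂, hx₂⟩ := h𝒜 u₂ hu₂
  have hp2 : 0 < μ := by
    refine relu_aux w b t' (fun j => -C j) μ ?_ ?_ x₂ (fun j hj => ?_)
      (fun j hj => (hx₂ j).2) j0 hj0 (by simpa using hCj0)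
    · have := h1
      calc ∑ j ∈ t', (-C j) • w j = -∑ j ∈ t', C j • w j := by
            rw [← Finset.sum_neg_distrib]
            exact Finset.sum_congr rfl fun j _ => by rw [neg_smul]
        _ = 0 := by rw [h1, neg_zero]
    · calc ∑ j ∈ t', (-C j) * b j = -∑ j ∈ t', C j * b j := by
            rw [← Finset.sum_neg_distrib]
            exact Finset.sum_congr rfl fun j _ => by ring
        _ = μ := by rw [h2, neg_neg]
    · rw [(hx₂ j).1]
      constructor
      · intro h
        have hmem : j ∈ t' ∩ u₂ := Finset.mem_inter.2 ⟨hj, h⟩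
        rw [htu₂] at hmem
        exact (Finset.mem_filter.1 hmem).2
      · intro h
        have hmem : j ∈ t'.filter (fun j => 0 < -C j) := Finset.mem_filter.2 ⟨hj, h⟩
        rw [← htu₂] at hmem
        exact (Finset.mem_inter.1 hmem).2
  linarith

/-- The number of linear regions of a ReLU layer with `n` inputs and `m`
outputs, i.e. the number of strict sign patterns `s ∈ {0,1}^m` realized by some
`x ∈ ℝⁿ` with `⟨wᵢ, x⟩ + bᵢ > 0 ⟺ sᵢ = 1` and `⟨wᵢ, x⟩ + bᵢ ≠ 0` for all `i`,
is at most `min(2^m, ∑_{j=0}^{n} C(m, j))`. -/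
theorem relu_layer_linear_regions_bound (n m : ℕ)
    (w : Fin m → EuclideanSpace ℝ (Fin n)) (b : Fin m → ℝ) :
    {s : Fin m → Bool | ∃ x : EuclideanSpace ℝ (Fin n), ∀ i : Fin m,
        ((0 < ⟪w i, x⟫ + b i) ↔ s i = true) ∧ ⟪w i, x⟫ + b i ≠ 0}.ncard ≤
      min (2 ^ m) (∑ j ∈ Finset.range (n + 1), Nat.choose m j) := by
  classical
  set S : Set (Fin m → Bool) := {s : Fin m → Bool | ∃ x : EuclideanSpace ℝ (Fin n), ∀ i : Fin m,
      ((0 < ⟪w i, x⟫ + b i) ↔ s i = true) ∧ ⟪w i, x⟫ + b i ≠ 0} with hSdef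
  have hfin : S.Finite := Set.toFinite S
  rw [Set.ncard_eq_toFinset_card S hfin]
  set F : Finset (Fin m → Bool) := hfin.toFinset with hFdef
  refine le_min ?_ ?_
  · calc F.card ≤ Fintype.card (Fin m → Bool) := Finset.card_le_univ F
      _ = 2 ^ m := by simp
  · set φ : (Fin m → Bool) → Finset (Fin m) :=
      fun s => Finset.univ.filter (fun i => s i = true) with hφdef
    have hφ : Function.Injective φ := by
      intro s s' h
      funext i
      have hmem : (i ∈ φ s) ↔ (i ∈ φ s') := by rw [h]
      simp only [hφdef, Finset.mem_filter, Finset.mem_univ, true_and] at hmem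
      cases hs : s i <;> cases hs' : s' i <;> simp_all
    set 𝒜 : Finset (Finset (Fin m)) := F.image φ with h𝒜def
    have h𝒜 : ∀ u ∈ 𝒜, ∃ x : EuclideanSpace ℝ (Fin n), ∀ i : Fin m,
        ((0 < ⟪w i, x⟫ + b i) ↔ i ∈ u) ∧ ⟪w i, x⟫ + b i ≠ 0 := by
      intro u hu
      obtain ⟨s, hsF, rfl⟩ := Finset.mem_image.1 hu
      have hsS : s ∈ S := (Set.Finite.mem_toFinset hfin).1 hsF
      obtain ⟨x, hx⟩ := hsS
      refine ⟨x, fun i => ⟨?_, (hx i).2⟩⟩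
      rw [(hx i).1]
      simp [hφdef]
    have hvc : 𝒜.vcDim ≤ n := by
      apply Finset.sup_le
      intro s hs
      exact relu_no_shatter w b 𝒜 h𝒜 s (Finset.mem_shatterer.1 hs)
    calc F.card = 𝒜.card := (Finset.card_image_of_injective F hφ).symm
      _ ≤ 𝒜.shatterer.card := Finset.card_le_card_shatterer 𝒜
      _ ≤ ∑ k ∈ Finset.Iic 𝒜.vcDim, (Fintype.card (Fin m)).choose k :=
          Finset.card_shatterer_le_sum_vcDim
      _ ≤ ∑ j ∈ Finset.range (n + 1), Nat.choose m j := by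
          rw [Fintype.card_fin]
          refine Finset.sum_le_sum_of_subset ?_
          intro k hk
          simp only [Finset.mem_Iic] at hk
          simp only [Finset.mem_range]
          omega
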